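/- Let C₁, ..., C_r be nontrivial finite cyclic groups. Then the derived length of the ascending iterated standard wreath product (···(C₁ ≀ C₂) ≀ ···) ≀ C_r equals r. -/

import Mathlib

/-- The automorphism action of `G` on `G → H` by right translation:
`(wrAut H G g) f x = f (x * g)`, so that the semidirect product below has
multiplication `(f₁, g₁)(f₂, g₂) = (f₁ · f₂^{g₁⁻¹}, g₁g₂)` with
`f₂^{g₁⁻¹}(x) = f₂ (x * g₁)`. -/
def wrAut (H G : Type*) [Group H] [Group G] : G →* MulAut (G → H) where
  toFun g :=
    { toFun := fun f x => f (x * g)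
      invFun := fun f x => f (x * g⁻¹)
      left_inv := fun f => funext fun x => by simp [mul_assoc]
      right_inv := fun f => funext fun x => by simp [mul_assoc]
      map_mul' := fun f₁ f₂ => rfl }
  map_one' := MulEquiv.ext fun f => funext fun x => by simp
  map_mul' := fun g₁ g₂ => MulEquiv.ext fun f => funext fun x => by simp [mul_assoc]

/-- The standard (regular) wreath product `H ≀ G`. -/
abbrev Wr (H G : Type*) [Group H] [Group G] := SemidirectProduct (G → H) G (wrAut H G)

/-- The standard wreath product of bundled groups. -/
def WrGrp (H G : GrpCat.{u}) : GrpCat.{u} := GrpCat.of (Wr H G)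

/-- Descending iterated standard wreath product `C₁ ≀ (C₂ ≀ (⋯ ≀ C_r)⋯)`,
given by a head group and the list of remaining groups. -/
def descW : GrpCat.{u} → List GrpCat.{u} → GrpCat.{u}
  | G, [] => G
  | G, H :: t => WrGrp G (descW H t)

/-- Ascending iterated standard wreath product `(⋯(C₁ ≀ C₂) ≀ ⋯) ≀ C_r`,
given by a head group and the list of remaining groups. -/
def ascW : GrpCat.{u} → List GrpCat.{u} → GrpCat.{u}
  | G, [] => G
  | G, H :: t => ascW (WrGrp G H) t

/-- Minimal number of generators of a group. -/
noncomputable def mingen (G : Type*) [Group G] : ℕ :=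
  sInf {n | ∃ S : Finset G, S.card = n ∧ Subgroup.closure (S : Set G) = ⊤}

/-- `d(G)`: minimal size of a subset whose normal closure is all of `G`. -/
noncomputable def dgen (G : Type*) [Group G] : ℕ :=
  sInf {n | ∃ S : Finset G, S.card = n ∧ Subgroup.normalClosure (S : Set G) = ⊤}

/-- Derived length: the least `n` with `derivedSeries G n = ⊥`. -/
noncomputable def dl (G : Type*) [Group G] : ℕ :=
  sInf {n | derivedSeries G n = ⊥}

open SemidirectProduct Subgroup
open scoped commutatorElement

section Aux

variable {G H : Type*} [Group G] [Group H]

lemma dS_bot_mono {X : Type*} [Group X] {m k : ℕ} (h : derivedSeries X m = ⊥) (hmk : m ≤ k) :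
    derivedSeries X k = ⊥ := by
  induction k with
  | zero => exact (Nat.le_zero.mp hmk) ▸ h
  | succ n ih =>
    rcases Nat.lt_or_ge m (n + 1) with h' | h'
    · rw [derivedSeries_succ, ih (Nat.lt_succ_iff.mp h'), Subgroup.commutator_bot_left]
    · exact (Nat.le_antisymm hmk h') ▸ h

lemma wr_dS_le (hcomm : ∀ a b : G, a * b = b * a) (n : ℕ) :
    derivedSeries (Wr H G) (n + 1) ≤
      Subgroup.map (inl : (G → H) →* Wr H G)
        (Subgroup.pi Set.univ fun _ : G => derivedSeries H n) := by
  induction n with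
  | zero =>
    simp only [derivedSeries_zero]
    rw [Subgroup.pi_top, ← MonoidHom.range_eq_map, range_inl_eq_ker_rightHom,
      derivedSeries_succ, derivedSeries_zero, Subgroup.commutator_le]
    intro a _ b _
    rw [MonoidHom.mem_ker, map_commutatorElement]
    exact commutatorElement_eq_one_iff_mul_comm.mpr (hcomm _ _)
  | succ m ih =>
    have key : ⁅Subgroup.pi Set.univ fun _ : G => derivedSeries H m,
        Subgroup.pi Set.univ fun _ : G => derivedSeries H m⁆ ≤
        Subgroup.pi Set.univ fun _ : G => derivedSeries H (m + 1) := by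
      intro f hf
      rw [Subgroup.mem_pi]
      intro x _
      have hx : f x ∈ Subgroup.map (Pi.evalMonoidHom (fun _ : G => H) x)
          ⁅Subgroup.pi Set.univ fun _ : G => derivedSeries H m,
            Subgroup.pi Set.univ fun _ : G => derivedSeries H m⁆ := ⟨f, hf, rfl⟩
      rw [Subgroup.map_commutator] at hx
      have hle : Subgroup.map (Pi.evalMonoidHom (fun _ : G => H) x)
          (Subgroup.pi Set.univ fun _ : G => derivedSeries H m) ≤ derivedSeries H m := by
        rintro y ⟨u, hu, rfl⟩
        exact (Subgroup.mem_pi _).mp hu x trivial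
      rw [derivedSeries_succ]
      exact Subgroup.commutator_mono hle hle hx
    calc derivedSeries (Wr H G) (m + 2)
        = ⁅derivedSeries (Wr H G) (m + 1), derivedSeries (Wr H G) (m + 1)⁆ :=
          derivedSeries_succ _ _
      _ ≤ ⁅Subgroup.map inl (Subgroup.pi Set.univ fun _ : G => derivedSeries H m),
            Subgroup.map inl (Subgroup.pi Set.univ fun _ : G => derivedSeries H m)⁆ :=
          Subgroup.commutator_mono ih ih
      _ = Subgroup.map inl ⁅Subgroup.pi Set.univ fun _ : G => derivedSeries H m,
            Subgroup.pi Set.univ fun _ : G => derivedSeries H m⁆ :=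
          (Subgroup.map_commutator _ _ _).symm
      _ ≤ _ := Subgroup.map_mono key

lemma wr_dS_eq_bot (hcomm : ∀ a b : G, a * b = b * a) {n : ℕ}
    (h : derivedSeries H n = ⊥) : derivedSeries (Wr H G) (n + 1) = ⊥ := by
  rw [eq_bot_iff]
  refine (wr_dS_le hcomm n).trans ?_
  rw [h, Subgroup.pi_bot, Subgroup.map_bot]

end Aux

section Lower

variable {G H : Type*} [Group G] [Group H]

lemma dS_subgroup_shift {X : Type*} [Group X] (S : Subgroup X)
    (hS : S ≤ derivedSeries X 1) (n : ℕ) :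
    Subgroup.map S.subtype (derivedSeries S n) ≤ derivedSeries X (n + 1) := by
  induction n with
  | zero =>
    rw [derivedSeries_zero]
    rintro x ⟨y, -, rfl⟩
    exact hS y.2
  | succ m ih =>
    rw [derivedSeries_succ, Subgroup.map_commutator,
      show derivedSeries X (m + 1 + 1) = ⁅derivedSeries X (m + 1), derivedSeries X (m + 1)⁆ from
        derivedSeries_succ _ _]
    exact Subgroup.commutator_mono ih ih

lemma wr_dS_ne_bot {g : G} (hg : g ≠ 1) {n : ℕ} (h : derivedSeries H n ≠ ⊥) :
    derivedSeries (Wr H G) (n + 1) ≠ ⊥ := by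
  classical
  set V : Subgroup (Wr H G) :=
    derivedSeries (Wr H G) 1 ⊓ (rightHom : Wr H G →* G).ker with hV
  have hVright : ∀ v : Wr H G, v ∈ V → v.right = 1 := by
    intro v hv
    exact hv.2
  let q : V →* H :=
    { toFun := fun v => (v : Wr H G).left 1
      map_one' := rfl
      map_mul' := by
        rintro ⟨v, hv⟩ ⟨w, hw⟩
        have hv1 : v.right = 1 := hVright v hv
        simp [SemidirectProduct.mul_left, hv1] }
  have hqsurj : Function.Surjective q := by
    intro a
    set f : G → H := fun x => if x = 1 then a else 1 with hf
    have hmem : ⁅(inl f : Wr H G), inr g⁆ ∈ V := by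
      constructor
      · rw [derivedSeries_succ, derivedSeries_zero]
        exact Subgroup.commutator_mem_commutator (Subgroup.mem_top _) (Subgroup.mem_top _)
      · have : (rightHom : Wr H G →* G) ⁅(inl f : Wr H G), inr g⁆ = 1 := by
          rw [map_commutatorElement]
          simp [commutatorElement_def]
        exact this
    refine ⟨⟨⁅(inl f : Wr H G), inr g⁆, hmem⟩, ?_⟩
    show (⁅(inl f : Wr H G), inr g⁆ : Wr H G).left 1 = a
    rw [commutatorElement_def]
    simp only [SemidirectProduct.mul_left, SemidirectProduct.inv_left,
      SemidirectProduct.inv_right, SemidirectProduct.mul_right,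
      SemidirectProduct.left_inl, SemidirectProduct.right_inl,
      SemidirectProduct.left_inr, SemidirectProduct.right_inr]
    simp [wrAut, hf, hg]
  have h2 : derivedSeries V n ≠ ⊥ := by
    intro hb
    apply h
    have hle := derivedSeries_le_map_derivedSeries hqsurj n
    rw [hb, Subgroup.map_bot] at hle
    exact le_bot_iff.mp hle
  obtain ⟨v, hvmem, hv1⟩ : ∃ v, v ∈ derivedSeries V n ∧ v ≠ 1 := by
    by_contra hc
    push_neg at hc
    exact h2 ((Subgroup.eq_bot_iff_forall _).mpr hc)
  intro hbot
  have : (v : Wr H G) ∈ derivedSeries (Wr H G) (n + 1) :=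
    dS_subgroup_shift V inf_le_left n ⟨v, hvmem, rfl⟩
  rw [hbot, Subgroup.mem_bot] at this
  exact hv1 (Subtype.ext this)

end Lower

section DL

variable {G H : Type*} [Group G] [Group H]

lemma dl_dS_bot [hs : Group.IsSolvable G] : derivedSeries G (dl G) = ⊥ :=
  Nat.sInf_mem hs.solvable

lemma wr_isSolvable (hcomm : ∀ a b : G, a * b = b * a) [hs : Group.IsSolvable H] :
    Group.IsSolvable (Wr H G) := by
  obtain ⟨m, hm⟩ := hs.solvable
  exact ⟨⟨m + 1, wr_dS_eq_bot hcomm hm⟩⟩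

lemma dl_wr (hcomm : ∀ a b : G, a * b = b * a) {g : G} (hg : g ≠ 1)
    [hs : Group.IsSolvable H] : dl (Wr H G) = dl H + 1 := by
  have hub : derivedSeries (Wr H G) (dl H + 1) = ⊥ := wr_dS_eq_bot hcomm dl_dS_bot
  apply le_antisymm (Nat.sInf_le hub)
  refine le_csInf ⟨dl H + 1, hub⟩ fun m hm => ?_
  by_contra hlt
  push_neg at hlt
  have hbot : derivedSeries (Wr H G) (dl H) = ⊥ := dS_bot_mono hm (by omega)
  have hne : derivedSeries (Wr H G) (dl H) ≠ ⊥ := by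
    cases hdl : dl H with
    | zero =>
      rw [derivedSeries_zero]
      intro htop
      have h1 : (inr g : Wr H G) ≠ 1 := by
        intro hh
        exact hg (inr_injective (by simpa using hh))
      exact h1 (Subgroup.mem_bot.mp (htop ▸ Subgroup.mem_top _))
    | succ e =>
      apply wr_dS_ne_bot hg
      intro hbe
      have : dl H ≤ e := Nat.sInf_le hbe
      omega
  exact hne hbot

lemma dl_comm_nontrivial {X : Type*} [Group X] [Nontrivial X]
    (hcomm : ∀ a b : X, a * b = b * a) : dl X = 1 := by
  have h1 : derivedSeries X 1 = ⊥ := by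
    rw [derivedSeries_succ, derivedSeries_zero, eq_bot_iff, Subgroup.commutator_le]
    intro a _ b _
    exact Subgroup.mem_bot.mpr (commutatorElement_eq_one_iff_mul_comm.mpr (hcomm _ _))
  apply le_antisymm (Nat.sInf_le h1)
  rw [Nat.one_le_iff_ne_zero]
  intro h0
  have h00 : derivedSeries X 0 = ⊥ := by
    have hmem := Nat.sInf_mem (⟨1, h1⟩ : Set.Nonempty {n | derivedSeries X n = ⊥})
    rwa [h0] at hmem
  rw [derivedSeries_zero] at h00
  obtain ⟨x, hx⟩ := exists_ne (1 : X)
  exact hx (Subgroup.mem_bot.mp (h00 ▸ Subgroup.mem_top x))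

lemma isCyclic_mul_comm {X : Type*} [Group X] (hc : IsCyclic X) :
    ∀ a b : X, a * b = b * a := by
  intro a b
  obtain ⟨gg, hgg⟩ := hc.exists_generator
  obtain ⟨m, rfl⟩ := hgg a
  obtain ⟨k, rfl⟩ := hgg b
  rw [← zpow_add, ← zpow_add, add_comm]

end DL


section Main

lemma main_aux (l : List GrpCat.{u}) : ∀ (G : GrpCat.{u}), Group.IsSolvable G →
    (∀ H ∈ l, Finite H ∧ IsCyclic H ∧ Nontrivial H) →
    dl (ascW G l) = dl G + l.length := by
  induction l with
  | nil => intro G _ _; simp [ascW]; rfl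
  | cons H t ih =>
    intro G hsG hl
    obtain ⟨hfin, hcyc, hnt⟩ := hl H (List.mem_cons_self)
    have hcomm := isCyclic_mul_comm hcyc
    haveI := hnt
    haveI := hsG
    obtain ⟨g, hg⟩ := exists_ne (1 : H)
    have hsW : Group.IsSolvable (Wr ↥G ↥H) := wr_isSolvable hcomm
    have hstep : dl (Wr ↥G ↥H) = dl ↥G + 1 := dl_wr hcomm hg
    have h1 : dl (ascW G (H :: t)) = dl (ascW (WrGrp G H) t) := rfl
    rw [h1, ih (WrGrp G H) hsW (fun H' hH' => hl H' (List.mem_cons_of_mem _ hH'))]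
    show dl (Wr ↥G ↥H) + t.length = dl ↥G + (H :: t).length
    rw [hstep, List.length_cons]
    omega

end Main

/-- The derived length of an ascending iterated standard wreath
product of `r` nontrivial finite cyclic groups (head `C₁` and tail list of length
`r - 1`) is exactly `r`. -/
theorem stmt11 (C₁ : GrpCat.{u}) (l : List GrpCat.{u})
    (h : ∀ H ∈ C₁ :: l, Finite H ∧ IsCyclic H ∧ Nontrivial H) :
    dl (ascW C₁ l) = l.length + 1 := by
  obtain ⟨hf, hc, hn⟩ := h C₁ (List.mem_cons_self)
  have hcomm := isCyclic_mul_comm hc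
  haveI := hn
  have hs : Group.IsSolvable ↥C₁ := by
    refine ⟨⟨1, ?_⟩⟩
    rw [derivedSeries_succ, derivedSeries_zero, eq_bot_iff, Subgroup.commutator_le]
    intro a _ b _
    exact Subgroup.mem_bot.mpr (commutatorElement_eq_one_iff_mul_comm.mpr (hcomm _ _))
  rw [main_aux l C₁ hs (fun H hH => h H (List.mem_cons_of_mem _ hH)),
    dl_comm_nontrivial hcomm]
  omega
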